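/- Consider k parallel coupled chains X_t^{(j)} = ψ_t(X_{t−1}^{(j)}, U_t^{(j)}) for j = 1, …, k and t = 1, …, T, where each ψ_t : ℝ^p × ℝ^d → ℝ^p is measurable and nondecreasing in both arguments (with respect to the coordinatewise partial orders), the k-tuples 𝒰_t = {U_t^{(1)}, …, U_t^{(k)}} (t = 1, …, T) are T mutually independent sets of negatively associated ℝ^d-valued random vectors, and these are also independent of the initial tuple {X_0^{(1)}, …, X_0^{(k)}}. Then the k-tuple {X_{t_1}^{(1)}, …, X_{t_k}^{(k)}} is a collection of k negatively associated random vectors for every choice of times (t_1, …, t_k) ∈ {0, 1, …, T}^k if and only if this holds for t_1 = ⋯ = t_k = 0 (i.e., the initial tuple {X_0^{(1)}, …, X_0^{(k)}} is negatively associated). -/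

import Mathlib

open MeasureTheory ProbabilityTheory

/-- Covariance of two real-valued functions with respect to a measure. -/
noncomputable def covar {Ω : Type*} [MeasurableSpace Ω] (μ : Measure Ω) (f g : Ω → ℝ) : ℝ :=
  (∫ ω, f ω * g ω ∂μ) - (∫ ω, f ω ∂μ) * ∫ ω, g ω ∂μ

/-- Negative association of a finite family of `ℝᵐ`-valued random vectors:
for every pair of disjoint index sets and every pair of real-valued functions,
each nondecreasing in every real coordinate of its arguments (and measurable),
for which the covariance is well defined, the covariance is nonpositive. -/
def NegAssocVec {Ω : Type*} [MeasurableSpace Ω] (μ : Measure Ω) {n m : ℕ}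
    (X : Fin n → Ω → (Fin m → ℝ)) : Prop :=
  ∀ A₁ A₂ : Finset (Fin n), Disjoint A₁ A₂ →
    ∀ f₁ : ({ i // i ∈ A₁ } → Fin m → ℝ) → ℝ, ∀ f₂ : ({ i // i ∈ A₂ } → Fin m → ℝ) → ℝ,
      Monotone f₁ → Monotone f₂ → Measurable f₁ → Measurable f₂ →
      Integrable (fun ω => f₁ (fun i => X i.1 ω)) μ →
      Integrable (fun ω => f₂ (fun i => X i.1 ω)) μ →
      Integrable (fun ω => f₁ (fun i => X i.1 ω) * f₂ (fun i => X i.1 ω)) μ →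
      covar μ (fun ω => f₁ (fun i => X i.1 ω)) (fun ω => f₂ (fun i => X i.1 ω)) ≤ 0

section helpers
variable {Ω : Type*} [MeasurableSpace Ω] {μ : Measure Ω}

lemma integrable_of_bdd {α : Type*} [MeasurableSpace α] {ν : Measure α} [IsFiniteMeasure ν]
    {f : α → ℝ} {C : ℝ} (hm : AEStronglyMeasurable f ν) (hb : ∀ x, |f x| ≤ C) :
    Integrable f ν :=
  (integrable_const C).mono' hm (Filter.Eventually.of_forall fun x => by
    simpa [Real.norm_eq_abs] using hb x)

noncomputable def trunc (M x : ℝ) : ℝ := max (min x M) (-M)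

lemma monotone_trunc (M : ℝ) : Monotone (trunc M) :=
  fun _ _ h => max_le_max (min_le_min h le_rfl) le_rfl

lemma continuous_trunc (M : ℝ) : Continuous (trunc M) :=
  (continuous_id.min continuous_const).max continuous_const

lemma abs_trunc_le (M x : ℝ) (hM : 0 ≤ M) : |trunc M x| ≤ M := by
  rw [abs_le]
  exact ⟨le_max_right _ _, max_le ((min_le_right x M)) ((neg_nonpos.mpr hM).trans hM)⟩

lemma abs_trunc_le_abs (M x : ℝ) (hM : 0 ≤ M) : |trunc M x| ≤ |x| := by
  rw [abs_le]
  constructor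
  · exact le_trans (le_min (neg_abs_le x) ((neg_nonpos.mpr (abs_nonneg x)).trans hM))
      (le_max_left _ _)
  · exact max_le ((min_le_left x M).trans (le_abs_self x))
      ((neg_nonpos.mpr hM).trans (abs_nonneg x))

lemma tendsto_trunc (x : ℝ) :
    Filter.Tendsto (fun M : ℕ => trunc M x) Filter.atTop (nhds x) := by
  apply Filter.Tendsto.congr' _ tendsto_const_nhds
  filter_upwards [Filter.eventually_ge_atTop ⌈|x|⌉₊] with M hM
  have h : |x| ≤ (M : ℝ) := le_trans (Nat.le_ceil _) (Nat.cast_le.mpr hM)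
  rw [abs_le] at h
  unfold trunc
  rw [min_eq_left h.2, max_eq_left h.1]

/-- To prove negative association it suffices to handle bounded monotone functions. -/
lemma negAssocVec_of_bdd [IsProbabilityMeasure μ] {n m : ℕ} {X : Fin n → Ω → Fin m → ℝ}
    (h : ∀ A₁ A₂ : Finset (Fin n), Disjoint A₁ A₂ →
      ∀ f₁ : ({ i // i ∈ A₁ } → Fin m → ℝ) → ℝ, ∀ f₂ : ({ i // i ∈ A₂ } → Fin m → ℝ) → ℝ,
        Monotone f₁ → Monotone f₂ → Measurable f₁ → Measurable f₂ →
        ∀ C₁ C₂ : ℝ, (∀ x, |f₁ x| ≤ C₁) → (∀ x, |f₂ x| ≤ C₂) →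
        covar μ (fun ω => f₁ (fun i => X i.1 ω)) (fun ω => f₂ (fun i => X i.1 ω)) ≤ 0) :
    NegAssocVec μ X := by
  intro A₁ A₂ hd f₁ f₂ hm₁ hm₂ hms₁ hms₂ hi₁ hi₂ hi₁₂
  set g₁ : Ω → ℝ := fun ω => f₁ (fun i => X i.1 ω) with hg₁
  set g₂ : Ω → ℝ := fun ω => f₂ (fun i => X i.1 ω) with hg₂
  have key : ∀ M : ℕ, covar μ (fun ω => trunc M (g₁ ω)) (fun ω => trunc M (g₂ ω)) ≤ 0 := by
    intro M
    exact h A₁ A₂ hd (fun x => trunc M (f₁ x)) (fun x => trunc M (f₂ x))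
      ((monotone_trunc M).comp hm₁) ((monotone_trunc M).comp hm₂)
      ((continuous_trunc M).measurable.comp hms₁) ((continuous_trunc M).measurable.comp hms₂)
      M M (fun x => abs_trunc_le _ _ (Nat.cast_nonneg M))
      (fun x => abs_trunc_le _ _ (Nat.cast_nonneg M))
  have hM0 : (0:ℝ) ≤ (0:ℝ) := le_rfl
  have t1 : Filter.Tendsto (fun M : ℕ => ∫ ω, trunc M (g₁ ω) * trunc M (g₂ ω) ∂μ)
      Filter.atTop (nhds (∫ ω, g₁ ω * g₂ ω ∂μ)) := by
    apply tendsto_integral_of_dominated_convergence (fun ω => |g₁ ω * g₂ ω|)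
    · intro M
      exact (((continuous_trunc M).comp_aestronglyMeasurable hi₁.aestronglyMeasurable).mul
        ((continuous_trunc M).comp_aestronglyMeasurable hi₂.aestronglyMeasurable))
    · exact hi₁₂.abs
    · intro M
      filter_upwards with ω
      rw [Real.norm_eq_abs, abs_mul, abs_mul]
      exact mul_le_mul (abs_trunc_le_abs _ _ (Nat.cast_nonneg M))
        (abs_trunc_le_abs _ _ (Nat.cast_nonneg M)) (abs_nonneg _) (abs_nonneg _)
    · filter_upwards with ω
      exact (tendsto_trunc (g₁ ω)).mul (tendsto_trunc (g₂ ω))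
  have t2 : Filter.Tendsto (fun M : ℕ => ∫ ω, trunc M (g₁ ω) ∂μ)
      Filter.atTop (nhds (∫ ω, g₁ ω ∂μ)) := by
    apply tendsto_integral_of_dominated_convergence (fun ω => |g₁ ω|)
    · intro M
      exact (continuous_trunc M).comp_aestronglyMeasurable hi₁.aestronglyMeasurable
    · exact hi₁.abs
    · intro M
      filter_upwards with ω
      rw [Real.norm_eq_abs]
      exact abs_trunc_le_abs _ _ (Nat.cast_nonneg M)
    · filter_upwards with ω
      exact tendsto_trunc (g₁ ω)
  have t3 : Filter.Tendsto (fun M : ℕ => ∫ ω, trunc M (g₂ ω) ∂μ)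
      Filter.atTop (nhds (∫ ω, g₂ ω ∂μ)) := by
    apply tendsto_integral_of_dominated_convergence (fun ω => |g₂ ω|)
    · intro M
      exact (continuous_trunc M).comp_aestronglyMeasurable hi₂.aestronglyMeasurable
    · exact hi₂.abs
    · intro M
      filter_upwards with ω
      rw [Real.norm_eq_abs]
      exact abs_trunc_le_abs _ _ (Nat.cast_nonneg M)
    · filter_upwards with ω
      exact tendsto_trunc (g₂ ω)
  have tt : Filter.Tendsto
      (fun M : ℕ => covar μ (fun ω => trunc M (g₁ ω)) (fun ω => trunc M (g₂ ω)))
      Filter.atTop (nhds (covar μ g₁ g₂)) := by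
    simp only [covar]
    exact t1.sub (t2.mul t3)
  exact le_of_tendsto tt (Filter.Eventually.of_forall key)

/-- Negative association is preserved by componentwise monotone measurable maps. -/
lemma NegAssocVec.comp {n m m' : ℕ} {X : Fin n → Ω → Fin m → ℝ} (hX : NegAssocVec μ X)
    (g : Fin n → (Fin m → ℝ) → (Fin m' → ℝ)) (hgmono : ∀ j, Monotone (g j))
    (hgmeas : ∀ j, Measurable (g j)) :
    NegAssocVec μ (fun j ω => g j (X j ω)) := by
  intro A₁ A₂ hd f₁ f₂ hm₁ hm₂ hms₁ hms₂ hi₁ hi₂ hi₁₂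
  exact hX A₁ A₂ hd (fun z => f₁ fun i => g i.1 (z i)) (fun z => f₂ fun i => g i.1 (z i))
    (fun z z' hz => hm₁ fun i => hgmono i.1 (hz i))
    (fun z z' hz => hm₂ fun i => hgmono i.1 (hz i))
    (hms₁.comp (measurable_pi_lambda _ fun i => (hgmeas i.1).comp (measurable_pi_apply i)))
    (hms₂.comp (measurable_pi_lambda _ fun i => (hgmeas i.1).comp (measurable_pi_apply i)))
    hi₁ hi₂ hi₁₂

end helpers

section append
variable {Ω : Type*} [MeasurableSpace Ω] {μ : Measure Ω}

lemma measurable_append {a b : ℕ} :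
    Measurable (fun q : (Fin a → ℝ) × (Fin b → ℝ) => Fin.append q.1 q.2) := by
  apply measurable_pi_lambda
  intro i
  induction i using Fin.addCases with
  | left i => simp only [Fin.append_left]; exact (measurable_pi_apply i).comp measurable_fst
  | right i => simp only [Fin.append_right]; exact (measurable_pi_apply i).comp measurable_snd

lemma monotone_append {a b : ℕ} :
    Monotone (fun q : (Fin a → ℝ) × (Fin b → ℝ) => Fin.append q.1 q.2) := by
  intro q q' h i
  induction i using Fin.addCases with
  | left i => simpa only [Fin.append_left] using h.1 i
  | right i => simpa only [Fin.append_right] using h.2 i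

/-- Union lemma: independent NA families, stacked componentwise, form an NA family. -/
lemma negAssocVec_append [IsProbabilityMeasure μ] {k a b : ℕ}
    {X : Fin k → Ω → Fin a → ℝ} {Y : Fin k → Ω → Fin b → ℝ}
    (hXm : ∀ j, Measurable (X j)) (hYm : ∀ j, Measurable (Y j))
    (hX : NegAssocVec μ X) (hY : NegAssocVec μ Y)
    (hind : IndepFun (fun ω (j : Fin k) => X j ω) (fun ω (j : Fin k) => Y j ω) μ) :
    NegAssocVec μ (fun j ω => Fin.append (X j ω) (Y j ω)) := by
  apply negAssocVec_of_bdd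
  intro A₁ A₂ hd f₁ f₂ hm₁ hm₂ hms₁ hms₂ C₁ C₂ hb₁ hb₂
  have hC₁ : (0:ℝ) ≤ C₁ := (abs_nonneg _).trans (hb₁ fun _ _ => 0)
  have hC₂ : (0:ℝ) ≤ C₂ := (abs_nonneg _).trans (hb₂ fun _ _ => 0)
  set Vt : Ω → (Fin k → Fin a → ℝ) := fun ω j => X j ω with hVtdef
  set Wt : Ω → (Fin k → Fin b → ℝ) := fun ω j => Y j ω with hWtdef
  have hVtm : Measurable Vt := measurable_pi_lambda _ fun j => hXm j
  have hWtm : Measurable Wt := measurable_pi_lambda _ fun j => hYm j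
  set μV := μ.map Vt with hμV
  set μW := μ.map Wt with hμW
  haveI : IsProbabilityMeasure μV := Measure.isProbabilityMeasure_map hVtm.aemeasurable
  haveI : IsProbabilityMeasure μW := Measure.isProbabilityMeasure_map hWtm.aemeasurable
  have hmap : μ.map (fun ω => (Vt ω, Wt ω)) = μV.prod μW :=
    (indepFun_iff_map_prod_eq_prod_map_map hVtm.aemeasurable hWtm.aemeasurable).mp hind
  -- the two functions as functions of the pair of full tuples
  set h₁ : (Fin k → Fin a → ℝ) × (Fin k → Fin b → ℝ) → ℝ :=
    fun q => f₁ fun i => Fin.append (q.1 i.1) (q.2 i.1) with hh₁def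
  set h₂ : (Fin k → Fin a → ℝ) × (Fin k → Fin b → ℝ) → ℝ :=
    fun q => f₂ fun i => Fin.append (q.1 i.1) (q.2 i.1) with hh₂def
  have base : ∀ (i : Fin k), Measurable
      (fun q : (Fin k → Fin a → ℝ) × (Fin k → Fin b → ℝ) => Fin.append (q.1 i) (q.2 i)) := by
    intro i
    have hpair : Measurable (fun q : (Fin k → Fin a → ℝ) × (Fin k → Fin b → ℝ) =>
        ((q.1 i, q.2 i) : (Fin a → ℝ) × (Fin b → ℝ))) :=
      ((measurable_pi_apply i).comp measurable_fst).prodMk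
        ((measurable_pi_apply i).comp measurable_snd)
    exact measurable_append.comp hpair
  have hh₁meas : Measurable h₁ :=
    hms₁.comp (measurable_pi_lambda _ fun i => base i.1)
  have hh₂meas : Measurable h₂ :=
    hms₂.comp (measurable_pi_lambda _ fun i => base i.1)
  have hh₁b : ∀ q, |h₁ q| ≤ C₁ := fun q => hb₁ _
  have hh₂b : ∀ q, |h₂ q| ≤ C₂ := fun q => hb₂ _
  -- transfer integrals over Ω to integrals over the product measure
  have key1 : ∀ (φ : (Fin k → Fin a → ℝ) × (Fin k → Fin b → ℝ) → ℝ), Measurable φ →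
      ∫ ω, φ (Vt ω, Wt ω) ∂μ = ∫ q, φ q ∂(μV.prod μW) := by
    intro φ hφ
    rw [← hmap, integral_map (hVtm.prodMk hWtm).aemeasurable hφ.aestronglyMeasurable]
  have keyW : ∀ (φ : (Fin k → Fin b → ℝ) → ℝ), Measurable φ →
      ∫ ω, φ (Wt ω) ∂μ = ∫ w, φ w ∂μW := by
    intro φ hφ
    rw [hμW, integral_map hWtm.aemeasurable hφ.aestronglyMeasurable]
  have keyV : ∀ (φ : (Fin k → Fin a → ℝ) → ℝ), Measurable φ →
      ∫ ω, φ (Vt ω) ∂μ = ∫ v, φ v ∂μV := by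
    intro φ hφ
    rw [hμV, integral_map hVtm.aemeasurable hφ.aestronglyMeasurable]
  -- bound for averaged sections
  have bF : ∀ (φ : (Fin k → Fin a → ℝ) × (Fin k → Fin b → ℝ) → ℝ) (C : ℝ),
      Measurable φ → (∀ q, |φ q| ≤ C) →
      ∀ v, |∫ w, φ (v, w) ∂μW| ≤ C := by
    intro φ C hφ hb v
    have hsec : Measurable (fun w => φ (v, w)) := hφ.comp measurable_prodMk_left
    calc |∫ w, φ (v, w) ∂μW| = ‖∫ w, φ (v, w) ∂μW‖ := (Real.norm_eq_abs _).symm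
      _ ≤ ∫ w, ‖φ (v, w)‖ ∂μW := norm_integral_le_integral_norm _
      _ ≤ ∫ _, C ∂μW := by
          refine integral_mono (integrable_of_bdd hsec.aestronglyMeasurable (fun w => hb _)).norm
            (integrable_const C) (fun w => ?_)
          rw [Real.norm_eq_abs]
          exact hb _
      _ = C := by simp
  -- inner inequality: for each fixed v, apply negative association of Y
  have innerNA : ∀ v : Fin k → Fin a → ℝ,
      ∫ w, h₁ (v, w) * h₂ (v, w) ∂μW ≤ (∫ w, h₁ (v, w) ∂μW) * ∫ w, h₂ (v, w) ∂μW := by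
    intro v
    have hφ₁ : Measurable (fun w => h₁ (v, w)) := hh₁meas.comp measurable_prodMk_left
    have hφ₂ : Measurable (fun w => h₂ (v, w)) := hh₂meas.comp measurable_prodMk_left
    have hg₁mono : Monotone (fun w' : { i // i ∈ A₁ } → Fin b → ℝ =>
        f₁ fun i => Fin.append (v i.1) (w' i)) :=
      fun w w' hw => hm₁ fun i => monotone_append (Prod.mk_le_mk.mpr ⟨le_rfl, hw i⟩)
    have hg₂mono : Monotone (fun w' : { i // i ∈ A₂ } → Fin b → ℝ =>
        f₂ fun i => Fin.append (v i.1) (w' i)) :=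
      fun w w' hw => hm₂ fun i => monotone_append (Prod.mk_le_mk.mpr ⟨le_rfl, hw i⟩)
    have hg₁meas : Measurable (fun w' : { i // i ∈ A₁ } → Fin b → ℝ =>
        f₁ fun i => Fin.append (v i.1) (w' i)) := by
      apply hms₁.comp
      apply measurable_pi_lambda
      intro i
      have h2 : Measurable (fun w' : { i // i ∈ A₁ } → Fin b → ℝ =>
          ((v i.1, w' i) : (Fin a → ℝ) × (Fin b → ℝ))) :=
        measurable_const.prodMk (measurable_pi_apply _)
      exact measurable_append.comp h2
    have hg₂meas : Measurable (fun w' : { i // i ∈ A₂ } → Fin b → ℝ =>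
        f₂ fun i => Fin.append (v i.1) (w' i)) := by
      apply hms₂.comp
      apply measurable_pi_lambda
      intro i
      have h2 : Measurable (fun w' : { i // i ∈ A₂ } → Fin b → ℝ =>
          ((v i.1, w' i) : (Fin a → ℝ) × (Fin b → ℝ))) :=
        measurable_const.prodMk (measurable_pi_apply _)
      exact measurable_append.comp h2
    have hmeasY : Measurable (fun ω => (fun (i : { i // i ∈ A₁ }) => Y i.1 ω)) :=
      measurable_pi_lambda _ fun i => hYm i.1
    have hmeasY₂ : Measurable (fun ω => (fun (i : { i // i ∈ A₂ }) => Y i.1 ω)) :=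
      measurable_pi_lambda _ fun i => hYm i.1
    have hi1 : Integrable (fun ω => f₁ fun i => Fin.append (v i.1) (Y i.1 ω)) μ :=
      integrable_of_bdd (hg₁meas.comp hmeasY).aestronglyMeasurable (fun ω => hb₁ _)
    have hi2 : Integrable (fun ω => f₂ fun i => Fin.append (v i.1) (Y i.1 ω)) μ :=
      integrable_of_bdd (hg₂meas.comp hmeasY₂).aestronglyMeasurable (fun ω => hb₂ _)
    have hi12 : Integrable (fun ω => (f₁ fun i => Fin.append (v i.1) (Y i.1 ω)) *
        (f₂ fun i => Fin.append (v i.1) (Y i.1 ω))) μ :=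
      integrable_of_bdd ((hg₁meas.comp hmeasY).mul (hg₂meas.comp hmeasY₂)).aestronglyMeasurable
        (fun ω => by
          rw [abs_mul]
          exact mul_le_mul (hb₁ _) (hb₂ _) (abs_nonneg _) hC₁)
    have hcov := hY A₁ A₂ hd _ _ hg₁mono hg₂mono hg₁meas hg₂meas hi1 hi2 hi12
    have ecov : covar μ (fun ω => f₁ fun i => Fin.append (v i.1) (Y i.1 ω))
        (fun ω => f₂ fun i => Fin.append (v i.1) (Y i.1 ω)) =
        (∫ w, h₁ (v, w) * h₂ (v, w) ∂μW) -
          (∫ w, h₁ (v, w) ∂μW) * ∫ w, h₂ (v, w) ∂μW := by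
      rw [covar]
      congr 1
      · exact keyW (fun w => h₁ (v, w) * h₂ (v, w)) (hφ₁.mul hφ₂)
      · congr 1
        · exact keyW (fun w => h₁ (v, w)) hφ₁
        · exact keyW (fun w => h₂ (v, w)) hφ₂
    rw [ecov] at hcov
    linarith
  -- the averaged functions, as functions of the restricted coordinates
  have sF₁ : StronglyMeasurable (fun v : Fin k → Fin a → ℝ => ∫ w, h₁ (v, w) ∂μW) :=
    hh₁meas.stronglyMeasurable.integral_prod_right'
  have sF₂ : StronglyMeasurable (fun v : Fin k → Fin a → ℝ => ∫ w, h₂ (v, w) ∂μW) :=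
    hh₂meas.stronglyMeasurable.integral_prod_right'
  -- restricted versions for applying negative association of X
  have hF₁'meas : Measurable (fun v' : { i // i ∈ A₁ } → Fin a → ℝ =>
      ∫ w, f₁ (fun i => Fin.append (v' i) (w i.1)) ∂μW) := by
    have hq : Measurable (fun q : ({ i // i ∈ A₁ } → Fin a → ℝ) × (Fin k → Fin b → ℝ) =>
        f₁ (fun i => Fin.append (q.1 i) (q.2 i.1))) := by
      apply hms₁.comp
      apply measurable_pi_lambda
      intro i
      have h2 : Measurable (fun q : ({ i // i ∈ A₁ } → Fin a → ℝ) × (Fin k → Fin b → ℝ) =>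
          ((q.1 i, q.2 i.1) : (Fin a → ℝ) × (Fin b → ℝ))) :=
        ((measurable_pi_apply i).comp measurable_fst).prodMk
          ((measurable_pi_apply (i.1 : Fin k)).comp measurable_snd)
      exact measurable_append.comp h2
    exact hq.stronglyMeasurable.integral_prod_right'.measurable
  have hF₂'meas : Measurable (fun v' : { i // i ∈ A₂ } → Fin a → ℝ =>
      ∫ w, f₂ (fun i => Fin.append (v' i) (w i.1)) ∂μW) := by
    have hq : Measurable (fun q : ({ i // i ∈ A₂ } → Fin a → ℝ) × (Fin k → Fin b → ℝ) =>
        f₂ (fun i => Fin.append (q.1 i) (q.2 i.1))) := by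
      apply hms₂.comp
      apply measurable_pi_lambda
      intro i
      have h2 : Measurable (fun q : ({ i // i ∈ A₂ } → Fin a → ℝ) × (Fin k → Fin b → ℝ) =>
          ((q.1 i, q.2 i.1) : (Fin a → ℝ) × (Fin b → ℝ))) :=
        ((measurable_pi_apply i).comp measurable_fst).prodMk
          ((measurable_pi_apply (i.1 : Fin k)).comp measurable_snd)
      exact measurable_append.comp h2
    exact hq.stronglyMeasurable.integral_prod_right'.measurable
  have hsec₁ : ∀ v' : { i // i ∈ A₁ } → Fin a → ℝ,
      Measurable (fun w : Fin k → Fin b → ℝ => f₁ (fun i => Fin.append (v' i) (w i.1))) := by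
    intro v'
    apply hms₁.comp
    apply measurable_pi_lambda
    intro i
    have h2 : Measurable (fun w : Fin k → Fin b → ℝ =>
        ((v' i, w i.1) : (Fin a → ℝ) × (Fin b → ℝ))) :=
      measurable_const.prodMk (measurable_pi_apply _)
    exact measurable_append.comp h2
  have hsec₂ : ∀ v' : { i // i ∈ A₂ } → Fin a → ℝ,
      Measurable (fun w : Fin k → Fin b → ℝ => f₂ (fun i => Fin.append (v' i) (w i.1))) := by
    intro v'
    apply hms₂.comp
    apply measurable_pi_lambda
    intro i
    have h2 : Measurable (fun w : Fin k → Fin b → ℝ =>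
        ((v' i, w i.1) : (Fin a → ℝ) × (Fin b → ℝ))) :=
      measurable_const.prodMk (measurable_pi_apply _)
    exact measurable_append.comp h2
  have hF₁'mono : Monotone (fun v' : { i // i ∈ A₁ } → Fin a → ℝ =>
      ∫ w, f₁ (fun i => Fin.append (v' i) (w i.1)) ∂μW) := by
    intro v v' hv
    refine integral_mono
      (integrable_of_bdd (hsec₁ v).aestronglyMeasurable (fun w => hb₁ _))
      (integrable_of_bdd (hsec₁ v').aestronglyMeasurable (fun w => hb₁ _)) (fun w => ?_)
    exact hm₁ fun i => monotone_append (Prod.mk_le_mk.mpr ⟨hv i, le_rfl⟩)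
  have hF₂'mono : Monotone (fun v' : { i // i ∈ A₂ } → Fin a → ℝ =>
      ∫ w, f₂ (fun i => Fin.append (v' i) (w i.1)) ∂μW) := by
    intro v v' hv
    refine integral_mono
      (integrable_of_bdd (hsec₂ v).aestronglyMeasurable (fun w => hb₂ _))
      (integrable_of_bdd (hsec₂ v').aestronglyMeasurable (fun w => hb₂ _)) (fun w => ?_)
    exact hm₂ fun i => monotone_append (Prod.mk_le_mk.mpr ⟨hv i, le_rfl⟩)
  have bF₁ : ∀ v, |∫ w, h₁ (v, w) ∂μW| ≤ C₁ := bF h₁ C₁ hh₁meas hh₁b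
  have bF₂ : ∀ v, |∫ w, h₂ (v, w) ∂μW| ≤ C₂ := bF h₂ C₂ hh₂meas hh₂b
  -- outer inequality: apply negative association of X to the averaged functions
  have outer : (∫ v, (∫ w, h₁ (v, w) ∂μW) * (∫ w, h₂ (v, w) ∂μW) ∂μV) -
      (∫ v, (∫ w, h₁ (v, w) ∂μW) ∂μV) * (∫ v, (∫ w, h₂ (v, w) ∂μW) ∂μV) ≤ 0 := by
    have hmeasX : Measurable (fun ω => (fun (i : { i // i ∈ A₁ }) => X i.1 ω)) :=
      measurable_pi_lambda _ fun i => hXm i.1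
    have hmeasX₂ : Measurable (fun ω => (fun (i : { i // i ∈ A₂ }) => X i.1 ω)) :=
      measurable_pi_lambda _ fun i => hXm i.1
    have hi1 : Integrable
        (fun ω => ∫ w, f₁ (fun i => Fin.append (X i.1 ω) (w i.1)) ∂μW) μ :=
      integrable_of_bdd (hF₁'meas.comp hmeasX).aestronglyMeasurable (fun ω => bF₁ (Vt ω))
    have hi2 : Integrable
        (fun ω => ∫ w, f₂ (fun i => Fin.append (X i.1 ω) (w i.1)) ∂μW) μ :=
      integrable_of_bdd (hF₂'meas.comp hmeasX₂).aestronglyMeasurable (fun ω => bF₂ (Vt ω))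
    have hi12 : Integrable
        (fun ω => (∫ w, f₁ (fun i => Fin.append (X i.1 ω) (w i.1)) ∂μW) *
          (∫ w, f₂ (fun i => Fin.append (X i.1 ω) (w i.1)) ∂μW)) μ :=
      integrable_of_bdd
        ((hF₁'meas.comp hmeasX).mul (hF₂'meas.comp hmeasX₂)).aestronglyMeasurable
        (fun ω => by
          rw [abs_mul]
          exact mul_le_mul (bF₁ (Vt ω)) (bF₂ (Vt ω)) (abs_nonneg _) hC₁)
    have hcov := hX A₁ A₂ hd _ _ hF₁'mono hF₂'mono hF₁'meas hF₂'meas hi1 hi2 hi12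
    have ecov : covar μ
        (fun ω => ∫ w, f₁ (fun i => Fin.append (X i.1 ω) (w i.1)) ∂μW)
        (fun ω => ∫ w, f₂ (fun i => Fin.append (X i.1 ω) (w i.1)) ∂μW) =
        (∫ v, (∫ w, h₁ (v, w) ∂μW) * (∫ w, h₂ (v, w) ∂μW) ∂μV) -
          (∫ v, (∫ w, h₁ (v, w) ∂μW) ∂μV) * (∫ v, (∫ w, h₂ (v, w) ∂μW) ∂μV) := by
      rw [covar]
      congr 1
      · exact keyV (fun v => (∫ w, h₁ (v, w) ∂μW) * ∫ w, h₂ (v, w) ∂μW)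
          (sF₁.measurable.mul sF₂.measurable)
      · congr 1
        · exact keyV (fun v => ∫ w, h₁ (v, w) ∂μW) sF₁.measurable
        · exact keyV (fun v => ∫ w, h₂ (v, w) ∂μW) sF₂.measurable
    rw [ecov] at hcov
    linarith
  -- now assemble everything
  have hb12 : ∀ q, |h₁ q * h₂ q| ≤ C₁ * C₂ := fun q => by
    rw [abs_mul]
    exact mul_le_mul (hh₁b q) (hh₂b q) (abs_nonneg _) hC₁
  have egoal : covar μ (fun ω => f₁ fun i => Fin.append (X i.1 ω) (Y i.1 ω))
      (fun ω => f₂ fun i => Fin.append (X i.1 ω) (Y i.1 ω)) =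
      (∫ q, h₁ q * h₂ q ∂(μV.prod μW)) -
        (∫ q, h₁ q ∂(μV.prod μW)) * ∫ q, h₂ q ∂(μV.prod μW) := by
    rw [covar]
    congr 1
    · exact key1 (fun q => h₁ q * h₂ q) (hh₁meas.mul hh₂meas)
    · congr 1
      · exact key1 h₁ hh₁meas
      · exact key1 h₂ hh₂meas
  have fub12 : ∫ q, h₁ q * h₂ q ∂(μV.prod μW) =
      ∫ v, ∫ w, h₁ (v, w) * h₂ (v, w) ∂μW ∂μV :=
    MeasureTheory.integral_prod _
      (integrable_of_bdd (hh₁meas.mul hh₂meas).aestronglyMeasurable hb12)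
  have fub1 : ∫ q, h₁ q ∂(μV.prod μW) = ∫ v, ∫ w, h₁ (v, w) ∂μW ∂μV :=
    MeasureTheory.integral_prod _ (integrable_of_bdd hh₁meas.aestronglyMeasurable hh₁b)
  have fub2 : ∫ q, h₂ q ∂(μV.prod μW) = ∫ v, ∫ w, h₂ (v, w) ∂μW ∂μV :=
    MeasureTheory.integral_prod _ (integrable_of_bdd hh₂meas.aestronglyMeasurable hh₂b)
  have step : ∫ v, ∫ w, h₁ (v, w) * h₂ (v, w) ∂μW ∂μV ≤
      ∫ v, (∫ w, h₁ (v, w) ∂μW) * (∫ w, h₂ (v, w) ∂μW) ∂μV := by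
    refine integral_mono
      (integrable_of_bdd
        ((hh₁meas.mul hh₂meas).stronglyMeasurable.integral_prod_right').aestronglyMeasurable
        (bF _ (C₁ * C₂) (hh₁meas.mul hh₂meas) hb12))
      (integrable_of_bdd (sF₁.mul sF₂).aestronglyMeasurable (fun v => by
        rw [abs_mul]
        exact mul_le_mul (bF₁ v) (bF₂ v) (abs_nonneg _) hC₁))
      innerNA
  have goal2 := egoal
  rw [egoal, fub12, fub1, fub2]
  linarith [outer, step]
end append

section indep
variable {Ω : Type*} [MeasurableSpace Ω] {μ : Measure Ω}

/-- If `P ⟂ Q` and `r₁ ∘ Q ⟂ r₂ ∘ Q`, then `(P, r₁ ∘ Q) ⟂ r₂ ∘ Q`. -/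
lemma indep_aux {α β γ δ : Type*} [MeasurableSpace α] [MeasurableSpace β]
    [MeasurableSpace γ] [MeasurableSpace δ] [IsProbabilityMeasure μ]
    {P : Ω → α} {Q : Ω → β} (hP : Measurable P) (hQ : Measurable Q)
    {r₁ : β → γ} {r₂ : β → δ} (hr₁ : Measurable r₁) (hr₂ : Measurable r₂)
    (hPQ : IndepFun P Q μ)
    (hr : IndepFun (fun ω => r₁ (Q ω)) (fun ω => r₂ (Q ω)) μ) :
    IndepFun (fun ω => (P ω, r₁ (Q ω))) (fun ω => r₂ (Q ω)) μ := by
  haveI : IsProbabilityMeasure (μ.map P) := Measure.isProbabilityMeasure_map hP.aemeasurable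
  haveI : IsProbabilityMeasure (μ.map Q) := Measure.isProbabilityMeasure_map hQ.aemeasurable
  haveI : IsProbabilityMeasure (μ.map (fun ω => r₁ (Q ω))) :=
    Measure.isProbabilityMeasure_map (hr₁.comp hQ).aemeasurable
  haveI : IsProbabilityMeasure (μ.map (fun ω => r₂ (Q ω))) :=
    Measure.isProbabilityMeasure_map (hr₂.comp hQ).aemeasurable
  have h1 : μ.map (fun ω => (P ω, Q ω)) = (μ.map P).prod (μ.map Q) :=
    (indepFun_iff_map_prod_eq_prod_map_map hP.aemeasurable hQ.aemeasurable).mp hPQ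
  have h2 : μ.map (fun ω => (r₁ (Q ω), r₂ (Q ω))) =
      (μ.map (fun ω => r₁ (Q ω))).prod (μ.map (fun ω => r₂ (Q ω))) :=
    (indepFun_iff_map_prod_eq_prod_map_map (hr₁.comp hQ).aemeasurable
      (hr₂.comp hQ).aemeasurable).mp hr
  have h3 : IndepFun P (fun ω => r₁ (Q ω)) μ := hPQ.comp measurable_id hr₁
  have h4 : μ.map (fun ω => (P ω, r₁ (Q ω))) =
      (μ.map P).prod (μ.map (fun ω => r₁ (Q ω))) :=
    (indepFun_iff_map_prod_eq_prod_map_map hP.aemeasurable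
      (hr₁.comp hQ).aemeasurable).mp h3
  refine (indepFun_iff_map_prod_eq_prod_map_map
    (hP.prodMk (hr₁.comp hQ)).aemeasurable (hr₂.comp hQ).aemeasurable).mpr ?_
  show Measure.map (fun ω => ((P ω, r₁ (Q ω)), r₂ (Q ω))) μ =
    (Measure.map (fun ω => (P ω, r₁ (Q ω))) μ).prod (Measure.map (fun ω => r₂ (Q ω)) μ)
  have hGm : Measurable (fun z : α × β => ((z.1, r₁ z.2), r₂ z.2)) :=
    (measurable_fst.prodMk (hr₁.comp measurable_snd)).prodMk (hr₂.comp measurable_snd)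
  have e : μ.map (fun ω => ((P ω, r₁ (Q ω)), r₂ (Q ω))) =
      ((μ.map P).prod (μ.map Q)).map (fun z : α × β => ((z.1, r₁ z.2), r₂ z.2)) := by
    rw [← h1, Measure.map_map hGm (hP.prodMk hQ)]
    rfl
  rw [e, h4]
  -- factor through the associativity equivalence
  have hrr : Measurable (fun q : β => (r₁ q, r₂ q)) := hr₁.prodMk hr₂
  have e2 : ((μ.map P).prod (μ.map Q)).map (fun z : α × β => ((z.1, r₁ z.2), r₂ z.2)) =
      (((μ.map P).prod (μ.map Q)).map (Prod.map id (fun q => (r₁ q, r₂ q)))).map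
        (MeasurableEquiv.prodAssoc (α := α) (β := γ) (γ := δ)).symm := by
    rw [Measure.map_map (MeasurableEquiv.prodAssoc).symm.measurable
      (measurable_id.prodMap hrr)]
    rfl
  rw [e2]
  have e3 : ((μ.map P).prod (μ.map Q)).map (Prod.map id (fun q => (r₁ q, r₂ q))) =
      (μ.map P).prod ((μ.map Q).map (fun q => (r₁ q, r₂ q))) := by
    rw [← Measure.map_prod_map _ _ measurable_id hrr, Measure.map_id]
  have e4 : (μ.map Q).map (fun q : β => (r₁ q, r₂ q)) =
      (μ.map (fun ω => r₁ (Q ω))).prod (μ.map (fun ω => r₂ (Q ω))) := by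
    rw [Measure.map_map hrr hQ]
    exact h2
  rw [e3, e4]
  rw [← Measure.prodAssoc_prod (μ := μ.map P) (ν := μ.map (fun ω => r₁ (Q ω)))
    (τ := μ.map (fun ω => r₂ (Q ω)))]
  rw [Measure.map_map (MeasurableEquiv.prodAssoc).symm.measurable
    (MeasurableEquiv.prodAssoc).measurable]
  have : (MeasurableEquiv.prodAssoc
      (α := α) (β := (γ)) (γ := δ)).symm ∘ (MeasurableEquiv.prodAssoc) = id := by
    funext z
    simp
  rw [this, Measure.map_id]
end indep

/-- The `k` parallel coupled chains `X_t⁽ʲ⁾ = ψ_t (X_{t-1}⁽ʲ⁾, U_t⁽ʲ⁾)`. -/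
def chain {Ω : Type*} {p d k : ℕ} (ψ : ℕ → (Fin p → ℝ) → (Fin d → ℝ) → Fin p → ℝ)
    (X0 : Fin k → Ω → Fin p → ℝ) (U : ℕ → Fin k → Ω → Fin d → ℝ) :
    ℕ → Fin k → Ω → Fin p → ℝ
  | 0 => X0
  | t + 1 => fun j ω => ψ (t + 1) (chain ψ X0 U t j ω) (U (t + 1) j ω)

/-- The chain as a function of the initial tuple and the first `n` innovations. -/
def chainFin {p d k : ℕ} (ψ : ℕ → (Fin p → ℝ) → (Fin d → ℝ) → Fin p → ℝ) (n : ℕ) :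
    ℕ → Fin k → (Fin k → Fin p → ℝ) × (Fin n → Fin k → Fin d → ℝ) → Fin p → ℝ
  | 0 => fun j q => q.1 j
  | t + 1 => fun j q =>
      if h : t < n then ψ (t + 1) (chainFin ψ n t j q) (q.2 ⟨t, h⟩ j) else 0

section chainlemmas
variable {Ω : Type*} [MeasurableSpace Ω] {p d k : ℕ}
  {ψ : ℕ → (Fin p → ℝ) → (Fin d → ℝ) → Fin p → ℝ}
  {X0 : Fin k → Ω → Fin p → ℝ} {U : ℕ → Fin k → Ω → Fin d → ℝ}

lemma chain_measurable (hψmeas : ∀ t, Measurable (fun q : (Fin p → ℝ) × (Fin d → ℝ) => ψ t q.1 q.2))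
    (hX0m : ∀ j, Measurable (X0 j)) (hUm : ∀ t j, Measurable (U t j)) :
    ∀ t j, Measurable (chain ψ X0 U t j) := by
  intro t
  induction t with
  | zero => exact hX0m
  | succ t ih =>
    intro j
    exact (hψmeas (t+1)).comp ((ih j).prodMk (hUm (t+1) j))

lemma chainFin_measurable {n : ℕ}
    (hψmeas : ∀ t, Measurable (fun q : (Fin p → ℝ) × (Fin d → ℝ) => ψ t q.1 q.2)) :
    ∀ t (j : Fin k), Measurable (chainFin ψ n t j) := by
  intro t
  induction t with
  | zero => exact fun j => (measurable_pi_apply j).comp measurable_fst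
  | succ t ih =>
    intro j
    by_cases h : t < n
    · have : chainFin (k := k) ψ n (t+1) j = fun q =>
          ψ (t + 1) (chainFin ψ n t j q) (q.2 ⟨t, h⟩ j) := by
        funext q
        simp only [chainFin, dif_pos h]
      rw [this]
      have hq2 : Measurable (fun q : (Fin k → Fin p → ℝ) × (Fin n → Fin k → Fin d → ℝ) =>
          q.2 ⟨t, h⟩ j) := by
        have h1 : Measurable (fun q : (Fin k → Fin p → ℝ) × (Fin n → Fin k → Fin d → ℝ) =>
            q.2 ⟨t, h⟩) := (measurable_pi_apply (⟨t, h⟩ : Fin n)).comp measurable_snd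
        exact (measurable_pi_apply j).comp h1
      exact (hψmeas (t+1)).comp ((ih j).prodMk hq2)
    · have : chainFin (k := k) ψ n (t+1) j = fun _ => 0 := by
        funext q
        simp only [chainFin, dif_neg h]
      rw [this]
      exact measurable_const

lemma chain_eq_chainFin (n : ℕ) :
    ∀ t, t ≤ n → ∀ (j : Fin k) (ω : Ω),
      chain ψ X0 U t j ω =
        chainFin ψ n t j (fun j' => X0 j' ω, fun (i : Fin n) j' => U (i.1 + 1) j' ω) := by
  intro t
  induction t with
  | zero => intro _ j ω; rfl
  | succ t ih =>
    intro ht j ω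
    have h : t < n := ht
    show ψ (t+1) (chain ψ X0 U t j ω) (U (t+1) j ω) = _
    rw [ih (le_of_lt h) j ω]
    simp only [chainFin, dif_pos h]
end chainlemmas

/-- For antithetically coupled chains driven by nondecreasing update functions and
independent negatively associated innovations, the tuple `{X_{t₁}⁽¹⁾, …, X_{t_k}⁽ᵏ⁾}` is
negatively associated for every choice of times in `{0, …, T}` iff the initial tuple is
negatively associated. -/
theorem chain_negAssoc_iff_initial {Ω : Type*} [MeasurableSpace Ω] (μ : Measure Ω)
    [IsProbabilityMeasure μ] {p d k : ℕ} (T : ℕ)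
    (ψ : ℕ → (Fin p → ℝ) → (Fin d → ℝ) → Fin p → ℝ)
    (X0 : Fin k → Ω → Fin p → ℝ) (U : ℕ → Fin k → Ω → Fin d → ℝ)
    (hψmono : ∀ t, Monotone (fun q : (Fin p → ℝ) × (Fin d → ℝ) => ψ t q.1 q.2))
    (hψmeas : ∀ t, Measurable (fun q : (Fin p → ℝ) × (Fin d → ℝ) => ψ t q.1 q.2))
    (hX0m : ∀ j, Measurable (X0 j)) (hUm : ∀ t j, Measurable (U t j))
    (hUNA : ∀ t, 1 ≤ t → t ≤ T → NegAssocVec μ (fun j => U t j))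
    (hUindep : iIndepFun
      (fun (t : Fin T) ω (j : Fin k) => U ((t : ℕ) + 1) j ω) μ)
    (hX0U : IndepFun (fun ω (j : Fin k) => X0 j ω)
      (fun ω (t : Fin T) (j : Fin k) => U ((t : ℕ) + 1) j ω) μ) :
    (∀ tv : Fin k → ℕ, (∀ j, tv j ≤ T) →
        NegAssocVec μ (fun j ω => chain ψ X0 U (tv j) j ω)) ↔
      NegAssocVec μ X0 := by
  constructor
  · intro h
    exact h (fun _ => 0) (fun j => Nat.zero_le T)
  · intro h0
    have main : ∀ n, n ≤ T → ∀ tv : Fin k → ℕ, (∀ j, tv j ≤ n) →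
        NegAssocVec μ (fun j ω => chain ψ X0 U (tv j) j ω) := by
      intro n
      induction n with
      | zero =>
        intro _ tv htv
        have e : (fun j ω => chain ψ X0 U (tv j) j ω) = X0 := by
          funext j ω
          rw [Nat.le_zero.mp (htv j)]
          rfl
        rw [e]
        exact h0
      | succ n ih =>
        intro hn1T tv htv
        have hnT : n ≤ T := le_trans (Nat.le_succ n) hn1T
        have hnt : n < T := hn1T
        have hprev : NegAssocVec μ (fun j ω => chain ψ X0 U (min (tv j) n) j ω) :=
          ih hnT _ (fun j => min_le_right _ _)
        have hchm : ∀ j, Measurable (fun ω => chain ψ X0 U (min (tv j) n) j ω) :=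
          fun j => chain_measurable hψmeas hX0m hUm _ j
        have hUm' : ∀ j, Measurable (U (n+1) j) := fun j => hUm (n+1) j
        have hPm : Measurable (fun ω (j : Fin k) => X0 j ω) :=
          measurable_pi_lambda _ fun j => hX0m j
        have hQm : Measurable (fun ω (t : Fin T) (j : Fin k) => U ((t:ℕ)+1) j ω) :=
          measurable_pi_lambda _ fun t => measurable_pi_lambda _ fun j => hUm _ j
        -- independence of the past from the new innovations
        have hdisj : Disjoint (Finset.univ.filter (fun s : Fin T => (s:ℕ) < n))
            ({(⟨n, hnt⟩ : Fin T)} : Finset (Fin T)) := by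
          rw [Finset.disjoint_left]
          intro s hs hsn
          rw [Finset.mem_singleton] at hsn
          rw [Finset.mem_filter] at hs
          subst hsn
          simp at hs
        have hfmeas : ∀ t : Fin T, Measurable (fun ω (j : Fin k) => U ((t:ℕ)+1) j ω) :=
          fun t => measurable_pi_lambda _ fun j => hUm _ j
        have hstep := hUindep.indepFun_finset
          (Finset.univ.filter (fun s : Fin T => (s:ℕ) < n)) {⟨n, hnt⟩} hdisj hfmeas
        have hρ₁ : Measurable (fun q :
            ({x // x ∈ Finset.univ.filter (fun s : Fin T => (s:ℕ) < n)} → Fin k → Fin d → ℝ) =>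
            fun i : Fin n => q ⟨⟨i.1, lt_of_lt_of_le i.2 (Nat.le_of_succ_le hn1T)⟩,
              Finset.mem_filter.mpr ⟨Finset.mem_univ _, i.2⟩⟩) :=
          measurable_pi_lambda _ fun i => measurable_pi_apply _
        have hρ₂ : Measurable (fun q :
            ({x // x ∈ ({(⟨n, hnt⟩ : Fin T)} : Finset (Fin T))} → Fin k → Fin d → ℝ) =>
            q ⟨⟨n, hnt⟩, Finset.mem_singleton_self _⟩) := measurable_pi_apply _
        have hrcomp := hstep.comp hρ₁ hρ₂
        have hr₁m : Measurable (fun q : Fin T → Fin k → Fin d → ℝ =>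
            fun i : Fin n => q ⟨i.1, lt_of_lt_of_le i.2 (Nat.le_of_succ_le hn1T)⟩) :=
          measurable_pi_lambda _ fun i => measurable_pi_apply _
        have hr₂m : Measurable (fun q : Fin T → Fin k → Fin d → ℝ => q ⟨n, hnt⟩) :=
          measurable_pi_apply _
        have hr : IndepFun
            (fun ω => (fun q : Fin T → Fin k → Fin d → ℝ =>
              fun i : Fin n => q ⟨i.1, lt_of_lt_of_le i.2 (Nat.le_of_succ_le hn1T)⟩)
              ((fun ω (t : Fin T) (j : Fin k) => U ((t:ℕ)+1) j ω) ω))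
            (fun ω => (fun q : Fin T → Fin k → Fin d → ℝ => q ⟨n, hnt⟩)
              ((fun ω (t : Fin T) (j : Fin k) => U ((t:ℕ)+1) j ω) ω)) μ := hrcomp
        have hindep0 := indep_aux hPm hQm hr₁m hr₂m hX0U hr
        have hΦm : Measurable (fun q :
            (Fin k → Fin p → ℝ) × (Fin n → Fin k → Fin d → ℝ) =>
            fun j : Fin k => chainFin ψ n (min (tv j) n) j q) :=
          measurable_pi_lambda _ fun j => chainFin_measurable hψmeas _ j
        have hindep1 := hindep0.comp hΦm measurable_id
        have hindepfinal : IndepFun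
            (fun ω (j : Fin k) => chain ψ X0 U (min (tv j) n) j ω)
            (fun ω (j : Fin k) => U (n+1) j ω) μ := by
          have e : (fun ω (j : Fin k) => chain ψ X0 U (min (tv j) n) j ω) =
              fun ω => (fun q : (Fin k → Fin p → ℝ) × (Fin n → Fin k → Fin d → ℝ) =>
                fun j : Fin k => chainFin ψ n (min (tv j) n) j q)
                ((fun j' => X0 j' ω), (fun (i : Fin n) (j' : Fin k) => U (i.1 + 1) j' ω)) := by
            funext ω j
            exact chain_eq_chainFin n (min (tv j) n) (min_le_right _ _) j ω
          rw [e]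
          exact hindep1
        have hstack := negAssocVec_append hchm hUm' hprev
          (hUNA (n+1) (Nat.succ_le_succ (Nat.zero_le n)) hn1T) hindepfinal
        -- apply the monotone update maps componentwise
        have hgmono : ∀ j : Fin k, Monotone (fun z : Fin (p+d) → ℝ =>
            if tv j = n + 1 then
              ψ (n+1) (fun i => z (Fin.castAdd d i)) (fun i => z (Fin.natAdd p i))
            else fun i => z (Fin.castAdd d i)) := by
          intro j z z' hz
          dsimp only
          split_ifs
          · exact hψmono (n+1) (Prod.mk_le_mk.mpr ⟨fun i => hz _, fun i => hz _⟩)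
          · exact fun i => hz _
        have hgmeas : ∀ j : Fin k, Measurable (fun z : Fin (p+d) → ℝ =>
            if tv j = n + 1 then
              ψ (n+1) (fun i => z (Fin.castAdd d i)) (fun i => z (Fin.natAdd p i))
            else fun i => z (Fin.castAdd d i)) := by
          intro j
          by_cases h : tv j = n + 1 <;> simp only [h, if_true, if_false]
          · have hpair : Measurable (fun z : Fin (p+d) → ℝ =>
                ((fun i => z (Fin.castAdd d i), fun i => z (Fin.natAdd p i)) :
                  (Fin p → ℝ) × (Fin d → ℝ))) :=
              (measurable_pi_lambda _ fun i => measurable_pi_apply _).prodMk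
                (measurable_pi_lambda _ fun i => measurable_pi_apply _)
            exact (hψmeas (n+1)).comp hpair
          · exact measurable_pi_lambda _ fun i => measurable_pi_apply _
        have hcomp := hstack.comp _ hgmono hgmeas
        have efin : (fun j ω => chain ψ X0 U (tv j) j ω) =
            fun (j : Fin k) (ω : Ω) =>
              (fun z : Fin (p+d) → ℝ =>
                if tv j = n + 1 then
                  ψ (n+1) (fun i => z (Fin.castAdd d i)) (fun i => z (Fin.natAdd p i))
                else fun i => z (Fin.castAdd d i))
              (Fin.append (chain ψ X0 U (min (tv j) n) j ω) (U (n+1) j ω)) := by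
          funext j ω
          by_cases h : tv j = n + 1
          · simp only [h, min_eq_right (Nat.le_succ n), if_pos]
            show ψ (n+1) (chain ψ X0 U n j ω) (U (n+1) j ω) = _
            have e1 : (fun i => Fin.append (chain ψ X0 U n j ω) (U (n+1) j ω)
                (Fin.castAdd d i)) = chain ψ X0 U n j ω :=
              funext fun i => Fin.append_left _ _ i
            have e2 : (fun i => Fin.append (chain ψ X0 U n j ω) (U (n+1) j ω)
                (Fin.natAdd p i)) = U (n+1) j ω :=
              funext fun i => Fin.append_right _ _ i
            rw [e1, e2]
          · have hle : tv j ≤ n := by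
              have := htv j
              omega
            simp only [if_neg h, min_eq_left hle]
            funext i
            exact (Fin.append_left _ _ i).symm
        rw [efin]
        exact hcomp
    exact fun tv htv => main T le_rfl tv htv
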